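/- Let r₁,…,r_d ∈ ℝ and let G be the d×d matrix whose (k,j) entry (for k,j = 1,…,d) is the (k−1)-th elementary symmetric polynomial e_{k−1} evaluated at the d−1 numbers {rᵢ : i ≠ j}. Then G is invertible if and only if r₁,…,r_d are pairwise distinct. -/

import Mathlib

open Matrix

lemma key_esymm {ι : Type*} [DecidableEq ι] (s : Finset ι) (r : ι → ℝ) (x : ℝ) :
    ∑ k ∈ Finset.range (s.card + 1),
        (∑ S ∈ s.powersetCard k, ∏ i ∈ S, r i) * ((-1 : ℝ) ^ k * x ^ (s.card - k)) =
      ∏ i ∈ s, (x - r i) := by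
  have h := Finset.prod_add (fun i => -r i) (fun _ => x) s
  simp only [neg_add_eq_sub] at h
  rw [h, Finset.powerset_card_disjiUnion]; erw [Finset.sum_disjiUnion]
  refine Finset.sum_congr rfl fun k hk => ?_
  rw [Finset.sum_mul]
  refine Finset.sum_congr rfl fun t ht => ?_
  obtain ⟨hts, htc⟩ := Finset.mem_powersetCard.mp ht
  have hneg : ∏ i ∈ t, -r i = (-1 : ℝ) ^ k * ∏ i ∈ t, r i := by
    rw [← htc, ← Finset.prod_const, ← Finset.prod_mul_distrib]
    simp
  rw [Finset.prod_const, Finset.card_sdiff_of_subset hts, htc, hneg]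
  ring

/-- Lemma 3.5 (paper): the matrix `G` whose `(k, j)` entry is the `k`-th elementary
symmetric polynomial of the `d − 1` numbers `{rᵢ : i ≠ j}` (rows indexed from `e₀ = 1`)
is invertible iff `r₁, …, r_d` are pairwise distinct. -/
theorem esymm_matrix_invertible_iff_distinct (d : ℕ) (r : Fin d → ℝ) :
    IsUnit (Matrix.of fun k j : Fin d =>
        ∑ S ∈ (Finset.univ.erase j).powersetCard (k : ℕ), ∏ i ∈ S, r i) ↔
      Function.Injective r := by
  set G : Matrix (Fin d) (Fin d) ℝ := Matrix.of fun k j : Fin d =>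
      ∑ S ∈ (Finset.univ.erase j).powersetCard (k : ℕ), ∏ i ∈ S, r i with hG
  rw [Matrix.isUnit_iff_isUnit_det, isUnit_iff_ne_zero]
  constructor
  · -- det ≠ 0 → injective, by contraposition
    intro hdet
    by_contra hinj
    obtain ⟨a, b, hab, hne⟩ := Function.not_injective_iff.mp hinj
    apply hdet
    apply Matrix.det_zero_of_column_eq hne
    intro k
    have hre : ∀ i, r (Equiv.swap a b i) = r i := by
      intro i
      rcases eq_or_ne i a with rfl | hia
      · rw [Equiv.swap_apply_left, hab]
      rcases eq_or_ne i b with rfl | hib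
      · rw [Equiv.swap_apply_right, hab]
      · rw [Equiv.swap_apply_of_ne_of_ne hia hib]
    have hswap : (Finset.univ.erase a).map (Equiv.swap a b).toEmbedding
        = Finset.univ.erase b := by
      rw [Finset.map_erase]
      simp [Finset.map_univ_equiv]
    simp only [hG, Matrix.of_apply]
    rw [← hswap, Finset.powersetCard_map, Finset.sum_map]
    refine Finset.sum_congr rfl fun S hS => ?_
    show ∏ i ∈ S, r i = ∏ i ∈ S.map (Equiv.swap a b).toEmbedding, r i
    rw [Finset.prod_map]
    exact (Finset.prod_congr rfl fun i _ => (hre i).symm)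
  · -- injective → det ≠ 0
    intro hinj
    rcases Nat.eq_zero_or_pos d with rfl | hd0
    · rw [Matrix.det_fin_zero]; exact one_ne_zero
    have hcard : ∀ j : Fin d, (Finset.univ.erase j).card = d - 1 := fun j => by
      rw [Finset.card_erase_of_mem (Finset.mem_univ j), Finset.card_univ, Fintype.card_fin]
    set A : Matrix (Fin d) (Fin d) ℝ :=
      Matrix.of fun k l : Fin d => (-1 : ℝ) ^ (k : ℕ) * r l ^ (d - 1 - (k : ℕ)) with hA
    have hGA : Gᵀ * A =
        Matrix.diagonal fun j => ∏ i ∈ Finset.univ.erase j, (r j - r i) := by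
      ext j l
      rw [Matrix.mul_apply]
      have hentry : ∑ k : Fin d, Gᵀ j k * A k l
          = ∏ i ∈ Finset.univ.erase j, (r l - r i) := by
        have hk := key_esymm (Finset.univ.erase j) r (r l)
        rw [hcard j] at hk
        have hd1 : d - 1 + 1 = d := Nat.succ_pred_eq_of_pos hd0
        rw [hd1] at hk
        have hsum : ∑ k : Fin d, Gᵀ j k * A k l
            = ∑ k ∈ Finset.range d,
              (∑ S ∈ (Finset.univ.erase j).powersetCard k, ∏ i ∈ S, r i)
                * ((-1 : ℝ) ^ k * r l ^ (d - 1 - k)) :=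
          Fin.sum_univ_eq_sum_range
            (fun k => (∑ S ∈ (Finset.univ.erase j).powersetCard k, ∏ i ∈ S, r i)
              * ((-1 : ℝ) ^ k * r l ^ (d - 1 - k))) d
        rw [hsum, hk]
      rw [hentry]
      rcases eq_or_ne j l with rfl | hjl
      · rw [Matrix.diagonal_apply_eq]
      · rw [Matrix.diagonal_apply_ne _ hjl]
        refine Finset.prod_eq_zero (Finset.mem_erase.mpr ⟨hjl.symm, Finset.mem_univ l⟩) ?_
        exact sub_self (r l)
    have hdet : G.det * A.det = ∏ j, ∏ i ∈ Finset.univ.erase j, (r j - r i) := by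
      have := congrArg Matrix.det hGA
      rwa [Matrix.det_mul, Matrix.det_transpose, Matrix.det_diagonal] at this
    have hne : (∏ j, ∏ i ∈ Finset.univ.erase j, (r j - r i)) ≠ 0 := by
      rw [Finset.prod_ne_zero_iff]
      intro j _
      rw [Finset.prod_ne_zero_iff]
      intro i hi
      exact sub_ne_zero_of_ne fun h => (Finset.ne_of_mem_erase hi) (hinj h.symm)
    exact left_ne_zero_of_mul (hdet ▸ hne)
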